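/- Let Φ: M_n(ℂ) → M_n(ℂ) be completely positive, unital, and trace-preserving with Kraus operators {Kᵢ}ᵢ₌₁^p, and define the complementary channel Φ^C(X) = ∑_{i,j} Tr(Kⱼ*KᵢX) E_{ij}. Then rank(Φ) · rank(Φ^C) ≥ n², where rank denotes the rank of the linear map. -/

import Mathlib

open Matrix
open scoped ComplexConjugate

namespace RkAux

noncomputable section

/-! ### Frobenius inner product basics -/

def finn {m k : Type*} [Fintype m] [Fintype k] (A B : Matrix m k ℂ) : ℂ :=
  ∑ i, ∑ j, conj (A i j) * B i j

def fnsq {m k : Type*} [Fintype m] [Fintype k] (A : Matrix m k ℂ) : ℝ :=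
  ∑ i, ∑ j, ‖A i j‖ ^ 2

variable {m k : Type*} [Fintype m] [Fintype k]

def memb {m k : Type*} [Fintype m] [Fintype k] :
    Matrix m k ℂ ≃ₗ[ℂ] EuclideanSpace ℂ (m × k) where
  toFun A := WithLp.toLp 2 (fun q : m × k => A q.1 q.2)
  invFun x := Matrix.of fun i j => x (i, j)
  map_add' := fun _ _ => rfl
  map_smul' := fun _ _ => rfl
  left_inv := fun _ => rfl
  right_inv := fun _ => rfl

lemma memb_apply (A : Matrix m k ℂ) (q : m × k) : memb A q = A q.1 q.2 := rfl

lemma memb_inner (A B : Matrix m k ℂ) :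
    (inner ℂ (memb A) (memb B) : ℂ) = finn A B := by
  rw [PiLp.inner_apply]
  simp only [RCLike.inner_apply, memb_apply]
  rw [finn, Fintype.sum_prod_type]
  exact Finset.sum_congr rfl fun _ _ => Finset.sum_congr rfl fun _ _ => mul_comm _ _

lemma memb_norm_sq (A : Matrix m k ℂ) : ‖memb A‖ ^ 2 = fnsq A := by
  rw [EuclideanSpace.norm_eq, Real.sq_sqrt (by positivity)]
  simp only [memb_apply]
  rw [fnsq, Fintype.sum_prod_type]

lemma fnsq_nonneg (A : Matrix m k ℂ) : 0 ≤ fnsq A := by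
  rw [fnsq]; positivity

lemma finn_self (A : Matrix m k ℂ) : finn A A = ((fnsq A : ℝ) : ℂ) := by
  rw [finn, fnsq]
  push_cast
  refine Finset.sum_congr rfl fun i _ => Finset.sum_congr rfl fun j _ => ?_
  rw [RCLike.conj_mul]
  norm_cast

lemma finn_le_half (A B : Matrix m k ℂ) : ‖finn A B‖ ≤ (fnsq A + fnsq B) / 2 := by
  have h1 : ‖finn A B‖ ≤ ‖memb A‖ * ‖memb B‖ := by
    rw [← memb_inner]; exact norm_inner_le_norm _ _
  have h2 : ‖memb A‖ * ‖memb B‖ ≤ (‖memb A‖ ^ 2 + ‖memb B‖ ^ 2) / 2 := by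
    nlinarith [sq_nonneg (‖memb A‖ - ‖memb B‖)]
  calc ‖finn A B‖ ≤ (‖memb A‖ ^ 2 + ‖memb B‖ ^ 2) / 2 := le_trans h1 h2
    _ = (fnsq A + fnsq B) / 2 := by rw [memb_norm_sq, memb_norm_sq]

lemma finn_eq_trace (A B : Matrix m k ℂ) :
    finn A B = Matrix.trace (Aᴴ * B) := by
  simp only [finn, Matrix.trace, Matrix.diag, Matrix.mul_apply, Matrix.conjTranspose_apply]
  exact Finset.sum_comm

lemma fnsq_eq_re_trace {nn : ℕ} (A : Matrix (Fin nn) (Fin nn) ℂ) :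
    fnsq A = (Matrix.trace (Aᴴ * A)).re := by
  rw [← finn_eq_trace, finn_self, Complex.ofReal_re]

/-! ### combinatorial Gram identity -/

lemma sum4 {M : Type*} [AddCommMonoid M] {ι κ : Type*} [Fintype ι] [Fintype κ]
    (F : ι → ι → κ → κ → M) :
    ∑ s, ∑ t, ∑ α, ∑ β, F s t α β = ∑ α, ∑ β, ∑ s, ∑ t, F s t α β := by
  calc ∑ s, ∑ t, ∑ α, ∑ β, F s t α β
      = ∑ s, ∑ α, ∑ t, ∑ β, F s t α β := by
        refine Finset.sum_congr rfl fun s _ => ?_; exact Finset.sum_comm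
    _ = ∑ α, ∑ s, ∑ t, ∑ β, F s t α β := Finset.sum_comm
    _ = ∑ α, ∑ s, ∑ β, ∑ t, F s t α β := by
        refine Finset.sum_congr rfl fun α _ => ?_
        refine Finset.sum_congr rfl fun s _ => ?_
        exact Finset.sum_comm
    _ = ∑ α, ∑ β, ∑ s, ∑ t, F s t α β := by
        refine Finset.sum_congr rfl fun α _ => ?_; exact Finset.sum_comm

/-- reorder (c d a b) ↦ (a c b d) -/
lemma sum4' {M : Type*} [AddCommMonoid M] {ι : Type*} [Fintype ι]
    (F : ι → ι → ι → ι → M) :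
    ∑ c, ∑ d, ∑ a, ∑ b, F c d a b = ∑ a, ∑ c, ∑ b, ∑ d, F c d a b := by
  calc ∑ c, ∑ d, ∑ a, ∑ b, F c d a b
      = ∑ c, ∑ a, ∑ d, ∑ b, F c d a b := by
        refine Finset.sum_congr rfl fun c _ => ?_; exact Finset.sum_comm
    _ = ∑ a, ∑ c, ∑ d, ∑ b, F c d a b := Finset.sum_comm
    _ = ∑ a, ∑ c, ∑ b, ∑ d, F c d a b := by
        refine Finset.sum_congr rfl fun a _ => ?_
        refine Finset.sum_congr rfl fun c _ => ?_
        exact Finset.sum_comm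

lemma hzz (z : ℂ) : z * conj z = ((‖z‖ ^ 2 : ℝ) : ℂ) := by
  rw [mul_comm, RCLike.conj_mul]; norm_cast

lemma sum_conj_mul_self {ι : Type*} [Fintype ι] (f : ι → ℂ) :
    ∑ a, conj (f a) * f a = ((∑ a, ‖f a‖ ^ 2 : ℝ) : ℂ) := by
  push_cast
  exact Finset.sum_congr rfl fun a _ => RCLike.conj_mul (f a)

lemma coreC {κ ι : Type*} [Fintype κ] [Fintype ι] (u : κ → ι → ℂ) :
    ∑ s : ι, ∑ t : ι, (∑ α : κ, u α s * conj (u α t)) * conj (∑ α : κ, u α s * conj (u α t))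
      = ∑ α : κ, ∑ β : κ, (∑ s : ι, u α s * conj (u β s)) * conj (∑ s : ι, u α s * conj (u β s)) := by
  simp only [map_sum, _root_.map_mul, Complex.conj_conj]
  simp only [Finset.sum_mul_sum]
  rw [sum4]
  refine Finset.sum_congr rfl fun α _ => ?_
  refine Finset.sum_congr rfl fun β _ => ?_
  refine Finset.sum_congr rfl fun s _ => ?_
  refine Finset.sum_congr rfl fun t _ => ?_
  ring_nf

lemma coreG {κ ι : Type*} [Fintype κ] [Fintype ι] (u : κ → ι → ℂ) :
    ∑ s : ι, ∑ t : ι, ‖∑ α : κ, u α s * conj (u α t)‖ ^ 2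
      = ∑ α : κ, ∑ β : κ, ‖∑ s : ι, u α s * conj (u β s)‖ ^ 2 := by
  have h := coreC u
  simp only [hzz] at h
  have h2 : ((∑ s : ι, ∑ t : ι, ‖∑ α : κ, u α s * conj (u α t)‖ ^ 2 : ℝ) : ℂ)
      = ((∑ α : κ, ∑ β : κ, ‖∑ s : ι, u α s * conj (u β s)‖ ^ 2 : ℝ) : ℂ) := by
    push_cast
    push_cast at h
    exact h
  exact_mod_cast h2

/-! ### Gram-dimension bound -/

lemma L1 {V : Type*} [NormedAddCommGroup V] [InnerProductSpace ℂ V] [FiniteDimensional ℂ V]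
    {ι : Type*} [Fintype ι] (v : ι → V) :
    (∑ a, ‖v a‖ ^ 2) ^ 2 ≤
      (Module.finrank ℂ (Submodule.span ℂ (Set.range v)) : ℝ) *
        ∑ a, ∑ b, ‖(inner ℂ (v a) (v b) : ℂ)‖ ^ 2 := by
  set U := Submodule.span ℂ (Set.range v) with hU
  set r := Module.finrank ℂ ↥U with hr
  let B : OrthonormalBasis (Fin r) ℂ ↥U := stdOrthonormalBasis ℂ ↥U
  let w : ι → ↥U := fun a => ⟨v a, Submodule.subset_span (Set.mem_range_self a)⟩
  let mm : Fin r → ι → ℂ := fun s a => inner ℂ (B s) (w a)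
  have hinner : ∀ a b, (inner ℂ (v a) (v b) : ℂ) = ∑ s, conj (mm s a) * mm s b := by
    intro a b
    have h := B.sum_inner_mul_inner (w a) (w b)
    have hc : (inner ℂ (w a) (w b) : ℂ) = inner ℂ (v a) (v b) := rfl
    rw [← hc, ← h]
    refine Finset.sum_congr rfl fun s _ => ?_
    exact congrArg₂ (· * ·) (inner_conj_symm (w a) (B s)).symm rfl
  have hnorm : ∀ a, ‖v a‖ ^ 2 = ∑ s, ‖mm s a‖ ^ 2 := by
    intro a
    have h1 : (inner ℂ (v a) (v a) : ℂ) = ((‖v a‖ : ℂ)) ^ 2 := inner_self_eq_norm_sq_to_K _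
    rw [hinner a a, sum_conj_mul_self] at h1
    exact_mod_cast h1.symm
  have hpairs : ∑ a, ∑ b, ‖(inner ℂ (v a) (v b) : ℂ)‖ ^ 2
      = ∑ s : Fin r, ∑ t : Fin r, ‖∑ a, conj (mm s a) * mm t a‖ ^ 2 := by
    have h := coreG (fun (s : Fin r) (a : ι) => conj (mm s a))
    simp only [Complex.conj_conj] at h
    calc ∑ a, ∑ b, ‖(inner ℂ (v a) (v b) : ℂ)‖ ^ 2
        = ∑ a, ∑ b, ‖∑ s, conj (mm s a) * mm s b‖ ^ 2 := by
          refine Finset.sum_congr rfl fun a _ => ?_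
          refine Finset.sum_congr rfl fun b _ => ?_
          rw [hinner]
      _ = ∑ s : Fin r, ∑ t : Fin r, ‖∑ a, conj (mm s a) * mm t a‖ ^ 2 := h
  rw [hpairs]
  have hA : ∑ a, ‖v a‖ ^ 2 = ∑ s : Fin r, ∑ a, ‖mm s a‖ ^ 2 := by
    rw [Finset.sum_comm]
    exact Finset.sum_congr rfl fun a _ => hnorm a
  have hdiag : ∀ s : Fin r, (∑ a, ‖mm s a‖ ^ 2) ^ 2 = ‖∑ a, conj (mm s a) * mm s a‖ ^ 2 := by
    intro s
    rw [sum_conj_mul_self, Complex.norm_real]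
    exact (sq_abs _).symm
  have hCS : (∑ s : Fin r, ∑ a, ‖mm s a‖ ^ 2) ^ 2
      ≤ (r : ℝ) * ∑ s : Fin r, (∑ a, ‖mm s a‖ ^ 2) ^ 2 := by
    have := sq_sum_le_card_mul_sum_sq (s := (Finset.univ : Finset (Fin r)))
      (f := fun s => ∑ a, ‖mm s a‖ ^ 2)
    simpa using this
  have hsum : ∑ s : Fin r, (∑ a, ‖mm s a‖ ^ 2) ^ 2
      ≤ ∑ s : Fin r, ∑ t : Fin r, ‖∑ a, conj (mm s a) * mm t a‖ ^ 2 := by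
    refine Finset.sum_le_sum fun s _ => ?_
    rw [hdiag s]
    exact Finset.single_le_sum (f := fun t => ‖∑ a, conj (mm s a) * mm t a‖ ^ 2)
      (fun t _ => by positivity) (Finset.mem_univ s)
  calc (∑ a, ‖v a‖ ^ 2) ^ 2 = (∑ s : Fin r, ∑ a, ‖mm s a‖ ^ 2) ^ 2 := by rw [hA]
    _ ≤ (r : ℝ) * ∑ s : Fin r, (∑ a, ‖mm s a‖ ^ 2) ^ 2 := hCS
    _ ≤ (r : ℝ) * ∑ s : Fin r, ∑ t : Fin r, ‖∑ a, conj (mm s a) * mm t a‖ ^ 2 :=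
        mul_le_mul_of_nonneg_left hsum (by positivity)

/-! ### contraction lemma -/

lemma sumHHc {nn pp : ℕ} (A : Fin pp → Matrix (Fin nn) (Fin nn) ℂ)
    (h1 : ∑ i, A i * (A i)ᴴ = 1) (h2 : ∑ i, (A i)ᴴ * A i = 1) :
    ∑ i, ∑ j, ((A i)ᴴ * A j) * ((A i)ᴴ * A j)ᴴ = 1 := by
  have inner1 : ∀ i, ∑ j, ((A i)ᴴ * A j) * ((A i)ᴴ * A j)ᴴ = (A i)ᴴ * A i := by
    intro i
    calc ∑ j, ((A i)ᴴ * A j) * ((A i)ᴴ * A j)ᴴ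
        = ∑ j, (A i)ᴴ * (A j * ((A j)ᴴ * A i)) := by
          refine Finset.sum_congr rfl fun j _ => ?_
          simp [Matrix.conjTranspose_mul, Matrix.mul_assoc]
      _ = (A i)ᴴ * ((∑ j, A j * (A j)ᴴ) * A i) := by
          rw [Finset.sum_mul, ← Finset.mul_sum]
          refine congrArg _ (Finset.sum_congr rfl fun j _ => ?_)
          rw [Matrix.mul_assoc]
      _ = (A i)ᴴ * A i := by rw [h1, Matrix.one_mul]
  rw [Finset.sum_congr rfl fun i _ => inner1 i, h2]

lemma sumHcH {nn pp : ℕ} (A : Fin pp → Matrix (Fin nn) (Fin nn) ℂ)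
    (h1 : ∑ i, A i * (A i)ᴴ = 1) (h2 : ∑ i, (A i)ᴴ * A i = 1) :
    ∑ i, ∑ j, ((A i)ᴴ * A j)ᴴ * ((A i)ᴴ * A j) = 1 := by
  rw [Finset.sum_comm]
  have inner2 : ∀ j, ∑ i, ((A i)ᴴ * A j)ᴴ * ((A i)ᴴ * A j) = (A j)ᴴ * A j := by
    intro j
    calc ∑ i, ((A i)ᴴ * A j)ᴴ * ((A i)ᴴ * A j)
        = ∑ i, (A j)ᴴ * (A i * ((A i)ᴴ * A j)) := by
          refine Finset.sum_congr rfl fun i _ => ?_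
          simp [Matrix.conjTranspose_mul, Matrix.mul_assoc]
      _ = (A j)ᴴ * ((∑ i, A i * (A i)ᴴ) * A j) := by
          rw [Finset.sum_mul, ← Finset.mul_sum]
          refine congrArg _ (Finset.sum_congr rfl fun i _ => ?_)
          rw [Matrix.mul_assoc]
      _ = (A j)ᴴ * A j := by rw [h1, Matrix.one_mul]
  rw [Finset.sum_congr rfl fun j _ => inner2 j, h2]

lemma L2 {nn pp : ℕ} (A : Fin pp → Matrix (Fin nn) (Fin nn) ℂ)
    (h1 : ∑ i, A i * (A i)ᴴ = 1) (h2 : ∑ i, (A i)ᴴ * A i = 1)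
    (Z : Matrix (Fin nn) (Fin nn) ℂ) :
    fnsq (∑ i, A i * Z * (A i)ᴴ) ≤ fnsq Z := by
  set W := ∑ i, A i * Z * (A i)ᴴ with hW
  set H : Fin pp → Fin pp → Matrix (Fin nn) (Fin nn) ℂ := fun i j => (A i)ᴴ * A j with hH
  have hWH : Wᴴ = ∑ i, A i * Zᴴ * (A i)ᴴ := by
    rw [hW, Matrix.conjTranspose_sum]
    refine Finset.sum_congr rfl fun i _ => ?_
    simp [Matrix.conjTranspose_mul, Matrix.mul_assoc]
  have hterm : ∀ i j, Matrix.trace ((A i * Zᴴ * (A i)ᴴ) * (A j * Z * (A j)ᴴ))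
      = finn ((H i j)ᴴ * Z) (Z * (H i j)ᴴ) := by
    intro i j
    have hr : finn ((H i j)ᴴ * Z) (Z * (H i j)ᴴ)
        = Matrix.trace (Zᴴ * ((A i)ᴴ * (A j * (Z * ((A j)ᴴ * A i))))) := by
      rw [finn_eq_trace]
      congr 1
      simp [hH, Matrix.conjTranspose_mul, Matrix.mul_assoc]
    rw [hr]
    simp only [Matrix.mul_assoc]
    rw [Matrix.trace_mul_comm]
    simp only [Matrix.mul_assoc]
  have hfinnWW : finn W W = ∑ i, ∑ j, finn ((H i j)ᴴ * Z) (Z * (H i j)ᴴ) := by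
    rw [finn_eq_trace, hWH, hW, Finset.sum_mul]
    rw [Matrix.trace_sum]
    refine Finset.sum_congr rfl fun i _ => ?_
    rw [Finset.mul_sum, Matrix.trace_sum]
    exact Finset.sum_congr rfl fun j _ => hterm i j
  have key1 : ∑ i, ∑ j, H i j * (H i j)ᴴ = 1 := sumHHc A h1 h2
  have key2 : ∑ i, ∑ j, (H i j)ᴴ * H i j = 1 := sumHcH A h1 h2
  have s1 : ∑ i, ∑ j, fnsq ((H i j)ᴴ * Z) = fnsq Z := by
    have e1 : ∀ i j, fnsq ((H i j)ᴴ * Z) = (Matrix.trace (Zᴴ * (H i j * (H i j)ᴴ * Z))).re := by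
      intro i j
      rw [fnsq_eq_re_trace]
      congr 2
      simp [Matrix.conjTranspose_mul, Matrix.mul_assoc]
    calc ∑ i, ∑ j, fnsq ((H i j)ᴴ * Z)
        = (Matrix.trace (Zᴴ * ((∑ i, ∑ j, H i j * (H i j)ᴴ) * Z))).re := by
          rw [Finset.sum_mul, Finset.mul_sum, Matrix.trace_sum, Complex.re_sum]
          refine Finset.sum_congr rfl fun i _ => ?_
          rw [Finset.sum_mul, Finset.mul_sum, Matrix.trace_sum, Complex.re_sum]
          exact Finset.sum_congr rfl fun j _ => e1 i j
      _ = fnsq Z := by rw [key1, Matrix.one_mul, ← fnsq_eq_re_trace]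
  have s2 : ∑ i, ∑ j, fnsq (Z * (H i j)ᴴ) = fnsq Z := by
    have e2 : ∀ i j, fnsq (Z * (H i j)ᴴ) = (Matrix.trace (Zᴴ * (Z * ((H i j)ᴴ * H i j)))).re := by
      intro i j
      rw [fnsq_eq_re_trace]
      congr 1
      have h3 : (Z * (H i j)ᴴ)ᴴ * (Z * (H i j)ᴴ) = H i j * (Zᴴ * (Z * (H i j)ᴴ)) := by
        simp [Matrix.conjTranspose_mul, Matrix.mul_assoc]
      rw [h3, Matrix.trace_mul_comm]
      simp only [Matrix.mul_assoc]
    calc ∑ i, ∑ j, fnsq (Z * (H i j)ᴴ)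
        = (Matrix.trace (Zᴴ * (Z * (∑ i, ∑ j, (H i j)ᴴ * H i j)))).re := by
          rw [Finset.mul_sum, Finset.mul_sum, Matrix.trace_sum, Complex.re_sum]
          refine Finset.sum_congr rfl fun i _ => ?_
          rw [Finset.mul_sum, Finset.mul_sum, Matrix.trace_sum, Complex.re_sum]
          exact Finset.sum_congr rfl fun j _ => e2 i j
      _ = fnsq Z := by rw [key2, Matrix.mul_one, ← fnsq_eq_re_trace]
  have habs : fnsq W ≤ ∑ i, ∑ j, ‖finn ((H i j)ᴴ * Z) (Z * (H i j)ᴴ)‖ := by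
    have h0 : (fnsq W : ℝ) = (finn W W).re := by rw [finn_self, Complex.ofReal_re]
    rw [h0, hfinnWW]
    calc (∑ i, ∑ j, finn ((H i j)ᴴ * Z) (Z * (H i j)ᴴ)).re
        ≤ ‖∑ i, ∑ j, finn ((H i j)ᴴ * Z) (Z * (H i j)ᴴ)‖ := Complex.re_le_norm _
      _ ≤ ∑ i, ‖∑ j, finn ((H i j)ᴴ * Z) (Z * (H i j)ᴴ)‖ := norm_sum_le _ _
      _ ≤ ∑ i, ∑ j, ‖finn ((H i j)ᴴ * Z) (Z * (H i j)ᴴ)‖ :=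
          Finset.sum_le_sum fun i _ => norm_sum_le _ _
  have hhalf : ∑ i, ∑ j, ‖finn ((H i j)ᴴ * Z) (Z * (H i j)ᴴ)‖
      ≤ (∑ i, ∑ j, fnsq ((H i j)ᴴ * Z) + ∑ i, ∑ j, fnsq (Z * (H i j)ᴴ)) / 2 := by
    rw [div_eq_inv_mul, ← Finset.sum_add_distrib, Finset.mul_sum]
    refine Finset.sum_le_sum fun i _ => ?_
    rw [← Finset.sum_add_distrib, Finset.mul_sum]
    refine Finset.sum_le_sum fun j _ => ?_
    rw [← div_eq_inv_mul]
    exact finn_le_half _ _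
  have hfin := le_trans habs hhalf
  rw [s1, s2] at hfin
  linarith

/-! ### span and finrank -/

lemma span_stdBasis_top {nn mm : ℕ} :
    Submodule.span ℂ (Set.range fun q : Fin nn × Fin mm => Matrix.single q.1 q.2 (1 : ℂ)) = ⊤ := by
  rw [eq_top_iff]
  intro X _
  rw [Matrix.matrix_eq_sum_single X]
  refine Submodule.sum_mem _ fun i _ => Submodule.sum_mem _ fun j _ => ?_
  have h : Matrix.single i j (X i j) = (X i j) • Matrix.single i j (1 : ℂ) := by
    rw [Matrix.smul_single, smul_eq_mul, mul_one]
  rw [h]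
  exact Submodule.smul_mem _ _ (Submodule.subset_span ⟨(i, j), rfl⟩)

lemma finrank_span_map {nn mm : ℕ}
    (f : Matrix (Fin nn) (Fin nn) ℂ →ₗ[ℂ] Matrix (Fin mm) (Fin mm) ℂ) :
    Module.finrank ℂ (Submodule.span ℂ (Set.range fun q : Fin nn × Fin nn =>
        memb (f (Matrix.single q.1 q.2 (1 : ℂ)))))
      = Module.finrank ℂ (LinearMap.range f) := by
  have h1 : Submodule.span ℂ (Set.range fun q : Fin nn × Fin nn =>
      memb (f (Matrix.single q.1 q.2 (1 : ℂ))))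
      = LinearMap.range ((memb.toLinearMap).comp f) := by
    rw [LinearMap.range_eq_map, ← span_stdBasis_top (nn := nn) (mm := nn), Submodule.map_span]
    congr 1
    rw [← Set.range_comp]
    rfl
  rw [h1, LinearMap.range_comp]
  exact LinearEquiv.finrank_map_eq memb (LinearMap.range f)


/-! ### entry computations and the Kraus-Gram identity -/

lemma entry_sandwich {nn : ℕ} {κ : Type*} [Fintype κ] (A : κ → Matrix (Fin nn) (Fin nn) ℂ)
    (c d a b : Fin nn) :
    (∑ α, A α * Matrix.single c d (1 : ℂ) * (A α)ᴴ) a b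
      = ∑ α, A α a c * conj (A α b d) := by
  rw [Matrix.sum_apply]
  refine Finset.sum_congr rfl fun α _ => ?_
  simp [Matrix.mul_apply, Matrix.single, Matrix.conjTranspose_apply, ite_and,
    Finset.mul_sum, Finset.sum_mul, mul_ite, ite_mul, mul_one, mul_zero, zero_mul,
    Finset.sum_ite_eq, Finset.sum_ite_eq']

lemma conj_trace_eq {nn : ℕ} (X Y : Matrix (Fin nn) (Fin nn) ℂ) :
    (∑ a, ∑ c, X a c * conj (Y a c)) = conj (Matrix.trace (Xᴴ * Y)) := by
  rw [← finn_eq_trace, finn, map_sum]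
  refine Finset.sum_congr rfl fun a _ => ?_
  rw [map_sum]
  refine Finset.sum_congr rfl fun c _ => ?_
  rw [_root_.map_mul, Complex.conj_conj]

lemma GK {nn : ℕ} {κ : Type*} [Fintype κ] (A : κ → Matrix (Fin nn) (Fin nn) ℂ) :
    ∑ q : Fin nn × Fin nn, fnsq (∑ α, A α * Matrix.single q.1 q.2 (1 : ℂ) * (A α)ᴴ)
      = ∑ α, ∑ β, ‖Matrix.trace ((A α)ᴴ * A β)‖ ^ 2 := by
  have hcore := coreG (κ := κ) (ι := Fin nn × Fin nn) (fun α s => A α s.1 s.2)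
  calc ∑ q : Fin nn × Fin nn, fnsq (∑ α, A α * Matrix.single q.1 q.2 (1 : ℂ) * (A α)ᴴ)
      = ∑ c, ∑ d, ∑ a, ∑ b, ‖∑ α, A α a c * conj (A α b d)‖ ^ 2 := by
        rw [Fintype.sum_prod_type]
        refine Finset.sum_congr rfl fun c _ => Finset.sum_congr rfl fun d _ => ?_
        rw [fnsq]
        exact Finset.sum_congr rfl fun a _ => Finset.sum_congr rfl fun b _ => by
          rw [entry_sandwich]
    _ = ∑ a, ∑ c, ∑ b, ∑ d, ‖∑ α, A α a c * conj (A α b d)‖ ^ 2 := sum4' _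
    _ = ∑ α, ∑ β, ‖∑ s : Fin nn × Fin nn, A α s.1 s.2 * conj (A β s.1 s.2)‖ ^ 2 := by
        rw [← hcore]
        rw [Fintype.sum_prod_type]
        refine Finset.sum_congr rfl fun a _ => ?_
        refine Finset.sum_congr rfl fun c _ => ?_
        rw [Fintype.sum_prod_type]
    _ = ∑ α, ∑ β, ‖Matrix.trace ((A α)ᴴ * A β)‖ ^ 2 := by
        refine Finset.sum_congr rfl fun α _ => Finset.sum_congr rfl fun β _ => ?_
        rw [Fintype.sum_prod_type]
        dsimp only
        rw [conj_trace_eq, RCLike.norm_conj]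

lemma trace_mul_std {nn : ℕ} (M : Matrix (Fin nn) (Fin nn) ℂ) (c d : Fin nn) :
    Matrix.trace (M * Matrix.single c d (1 : ℂ)) = M d c := by
  simp [Matrix.trace, Matrix.diag, Matrix.mul_apply, Matrix.single, ite_and,
    mul_ite, mul_one, mul_zero, Finset.sum_ite_eq, Finset.sum_ite_eq']

lemma coord_finn {nn : ℕ} (q : Fin nn × Fin nn) (M : Matrix (Fin nn) (Fin nn) ℂ) :
    finn (Matrix.single q.1 q.2 (1 : ℂ)) M = M q.1 q.2 := by
  rw [finn]
  simp [Matrix.single, apply_ite (starRingEnd ℂ), ite_and, _root_.map_one, _root_.map_zero,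
    ite_mul, one_mul, zero_mul, Finset.sum_ite_eq, Finset.sum_ite_eq']

end

end RkAux

set_option maxHeartbeats 2000000 in
/-- For a unital, trace-preserving completely positive map `Φ : Mₙ(ℂ) → Mₙ(ℂ)` with
Kraus operators `{Kᵢ}` and complementary channel `Φ^C(X) = ∑_{i,j} Tr(Kⱼ* Kᵢ X) E_{ij}`,
`rank(Φ) · rank(Φ^C) ≥ n²`. -/
theorem rank_mul_rank_complement_ge_sq {n p : ℕ}
    (K : Fin p → Matrix (Fin n) (Fin n) ℂ)
    (hu : ∑ i, K i * (K i)ᴴ = 1)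
    (htp : ∑ i, (K i)ᴴ * K i = 1)
    (Φ : Matrix (Fin n) (Fin n) ℂ →ₗ[ℂ] Matrix (Fin n) (Fin n) ℂ)
    (ΦC : Matrix (Fin n) (Fin n) ℂ →ₗ[ℂ] Matrix (Fin p) (Fin p) ℂ)
    (hΦ : ∀ X, Φ X = ∑ i, K i * X * (K i)ᴴ)
    (hΦC : ∀ X, ΦC X = Matrix.of fun i j => Matrix.trace ((K j)ᴴ * K i * X)) :
    n ^ 2 ≤ Module.finrank ℂ (LinearMap.range Φ) * Module.finrank ℂ (LinearMap.range ΦC) := by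
  classical
  open RkAux in
  set Q : Fin p × Fin p → Matrix (Fin n) (Fin n) ℂ := fun α => (K α.2)ᴴ * K α.1 with hQ
  set g : ℝ := ∑ α : Fin p, ∑ β : Fin p, ‖Matrix.trace ((K α)ᴴ * K β)‖ ^ 2 with hg
  set gQ : ℝ := ∑ α : Fin p × Fin p, ∑ β : Fin p × Fin p,
    ‖Matrix.trace ((Q α)ᴴ * Q β)‖ ^ 2 with hgQ
  -- (1) sum of fnsq of Φ on the standard basis equals g
  have hPhiFnsq : ∑ q : Fin n × Fin n,
      RkAux.fnsq (Φ (Matrix.single q.1 q.2 (1:ℂ))) = g := by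
    rw [hg, ← RkAux.GK (A := K)]
    refine Finset.sum_congr rfl fun q _ => ?_
    rw [hΦ]
  -- entries of ΦC on basis matrices
  have hentC : ∀ (q : Fin n × Fin n) (i j : Fin p),
      (ΦC (Matrix.single q.1 q.2 (1:ℂ))) i j = Q (i, j) q.2 q.1 := by
    intro q i j
    rw [hΦC]
    show Matrix.trace ((K j)ᴴ * K i * Matrix.single q.1 q.2 (1:ℂ)) = Q (i, j) q.2 q.1
    rw [RkAux.trace_mul_std, hQ]
  -- the double Kraus family assembles the composite Φ* ∘ Φ
  have hSS : ∀ X : Matrix (Fin n) (Fin n) ℂ,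
      ∑ α : Fin p × Fin p, Q α * X * (Q α)ᴴ = ∑ j, (K j)ᴴ * (Φ X) * ((K j)ᴴ)ᴴ := by
    intro X
    rw [Fintype.sum_prod_type, Finset.sum_comm]
    refine Finset.sum_congr rfl fun j _ => ?_
    rw [hΦ, Matrix.conjTranspose_conjTranspose, Finset.mul_sum, Finset.sum_mul]
    refine Finset.sum_congr rfl fun i _ => ?_
    rw [hQ]
    simp only [Matrix.conjTranspose_mul, Matrix.conjTranspose_conjTranspose, Matrix.mul_assoc]
  set D : ℝ := ∑ q : Fin n × Fin n,
    RkAux.fnsq (∑ α : Fin p × Fin p, Q α * Matrix.single q.1 q.2 (1:ℂ) * (Q α)ᴴ) with hD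
  have hDgQ : D = gQ := by rw [hD, hgQ]; exact RkAux.GK (A := Q)
  have hDle : D ≤ g := by
    rw [hD, ← hPhiFnsq]
    refine Finset.sum_le_sum fun q _ => ?_
    rw [hSS]
    refine RkAux.L2 (fun j => (K j)ᴴ) ?_ ?_ _
    · simpa [Matrix.conjTranspose_conjTranspose] using htp
    · simpa [Matrix.conjTranspose_conjTranspose] using hu
  -- pair sums of the ΦC family compute gQ
  have hfinnC : ∀ q q' : Fin n × Fin n,
      RkAux.finn (ΦC (Matrix.single q.1 q.2 (1:ℂ))) (ΦC (Matrix.single q'.1 q'.2 (1:ℂ)))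
        = ∑ α : Fin p × Fin p, Q α q'.2 q'.1 * conj (Q α q.2 q.1) := by
    intro q q'
    rw [RkAux.finn, Fintype.sum_prod_type]
    refine Finset.sum_congr rfl fun i _ => Finset.sum_congr rfl fun j _ => ?_
    rw [hentC, hentC]
    ring
  have hpairsC : (∑ q : Fin n × Fin n, ∑ q' : Fin n × Fin n,
      ‖RkAux.finn (ΦC (Matrix.single q.1 q.2 (1:ℂ)))
        (ΦC (Matrix.single q'.1 q'.2 (1:ℂ)))‖ ^ 2) = gQ := by
    have hcore := RkAux.coreG (κ := Fin p × Fin p) (ι := Fin n × Fin n)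
      (fun α s => Q α s.2 s.1)
    calc ∑ q : Fin n × Fin n, ∑ q' : Fin n × Fin n,
        ‖RkAux.finn (ΦC (Matrix.single q.1 q.2 (1:ℂ)))
          (ΦC (Matrix.single q'.1 q'.2 (1:ℂ)))‖ ^ 2
        = ∑ q : Fin n × Fin n, ∑ q' : Fin n × Fin n,
            ‖∑ α : Fin p × Fin p, Q α q'.2 q'.1 * conj (Q α q.2 q.1)‖ ^ 2 :=
          Finset.sum_congr rfl fun q _ => Finset.sum_congr rfl fun q' _ => by rw [hfinnC]
      _ = ∑ s : Fin n × Fin n, ∑ t : Fin n × Fin n,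
            ‖∑ α : Fin p × Fin p, Q α s.2 s.1 * conj (Q α t.2 t.1)‖ ^ 2 := Finset.sum_comm
      _ = ∑ α : Fin p × Fin p, ∑ β : Fin p × Fin p,
            ‖∑ s : Fin n × Fin n, Q α s.2 s.1 * conj (Q β s.2 s.1)‖ ^ 2 := hcore
      _ = gQ := by
          rw [hgQ]
          refine Finset.sum_congr rfl fun α _ => Finset.sum_congr rfl fun β _ => ?_
          have h1 : ∑ s : Fin n × Fin n, Q α s.2 s.1 * conj (Q β s.2 s.1)
              = ∑ a, ∑ c, Q α a c * conj (Q β a c) := by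
            rw [Fintype.sum_prod_type]
            exact Finset.sum_comm
          rw [h1, RkAux.conj_trace_eq, RCLike.norm_conj]
  -- sum of fnsq of ΦC equals n
  have hsumC : ∑ q : Fin n × Fin n,
      RkAux.fnsq (ΦC (Matrix.single q.1 q.2 (1:ℂ))) = (n : ℝ) := by
    have step1 : ∑ q : Fin n × Fin n, RkAux.fnsq (ΦC (Matrix.single q.1 q.2 (1:ℂ)))
        = ∑ α : Fin p × Fin p, RkAux.fnsq (Q α) := by
      calc ∑ q : Fin n × Fin n, RkAux.fnsq (ΦC (Matrix.single q.1 q.2 (1:ℂ)))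
          = ∑ q : Fin n × Fin n, ∑ α : Fin p × Fin p, ‖Q α q.2 q.1‖ ^ 2 := by
            refine Finset.sum_congr rfl fun q _ => ?_
            rw [RkAux.fnsq, Fintype.sum_prod_type]
            refine Finset.sum_congr rfl fun i _ => Finset.sum_congr rfl fun j _ => ?_
            rw [hentC]
        _ = ∑ α : Fin p × Fin p, ∑ q : Fin n × Fin n, ‖Q α q.2 q.1‖ ^ 2 := Finset.sum_comm
        _ = ∑ α : Fin p × Fin p, RkAux.fnsq (Q α) := by
            refine Finset.sum_congr rfl fun α _ => ?_
            rw [RkAux.fnsq, Fintype.sum_prod_type]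
            exact Finset.sum_comm
    rw [step1]
    have hsum1 : ∑ α : Fin p × Fin p, (Q α)ᴴ * Q α = 1 := by
      rw [Fintype.sum_prod_type]
      have h := RkAux.sumHHc K hu htp
      simp only [hQ]
      simp only [Matrix.conjTranspose_mul, Matrix.conjTranspose_conjTranspose]
      simpa [Matrix.conjTranspose_mul] using h
    calc ∑ α : Fin p × Fin p, RkAux.fnsq (Q α)
        = (Matrix.trace (∑ α : Fin p × Fin p, (Q α)ᴴ * Q α)).re := by
          rw [Matrix.trace_sum, Complex.re_sum]
          exact Finset.sum_congr rfl fun α _ => RkAux.fnsq_eq_re_trace (Q α)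
      _ = (n : ℝ) := by rw [hsum1, Matrix.trace_one]; simp
  -- adjoint identity and pair sums of the Φ family compute D
  have hadj : ∀ X Y : Matrix (Fin n) (Fin n) ℂ,
      RkAux.finn (Φ X) (Φ Y) = RkAux.finn X (∑ α : Fin p × Fin p, Q α * Y * (Q α)ᴴ) := by
    intro X Y
    rw [hSS Y, RkAux.finn_eq_trace, RkAux.finn_eq_trace]
    conv_lhs => rw [hΦ X]
    rw [Matrix.conjTranspose_sum]
    simp only [Matrix.conjTranspose_mul, Matrix.conjTranspose_conjTranspose]
    rw [Finset.sum_mul, Matrix.trace_sum, Finset.mul_sum, Matrix.trace_sum]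
    refine Finset.sum_congr rfl fun i _ => ?_
    simp only [Matrix.mul_assoc]
    rw [Matrix.trace_mul_comm]
    simp only [Matrix.mul_assoc]
  have hpairsP : (∑ q : Fin n × Fin n, ∑ q' : Fin n × Fin n,
      ‖RkAux.finn (Φ (Matrix.single q.1 q.2 (1:ℂ)))
        (Φ (Matrix.single q'.1 q'.2 (1:ℂ)))‖ ^ 2) = D := by
    calc ∑ q : Fin n × Fin n, ∑ q' : Fin n × Fin n,
        ‖RkAux.finn (Φ (Matrix.single q.1 q.2 (1:ℂ)))
          (Φ (Matrix.single q'.1 q'.2 (1:ℂ)))‖ ^ 2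
        = ∑ q : Fin n × Fin n, ∑ q' : Fin n × Fin n,
            ‖(∑ α : Fin p × Fin p, Q α * Matrix.single q'.1 q'.2 (1:ℂ) * (Q α)ᴴ) q.1 q.2‖ ^ 2 := by
          refine Finset.sum_congr rfl fun q _ => Finset.sum_congr rfl fun q' _ => ?_
          rw [hadj, RkAux.coord_finn]
      _ = ∑ q' : Fin n × Fin n, ∑ q : Fin n × Fin n,
            ‖(∑ α : Fin p × Fin p, Q α * Matrix.single q'.1 q'.2 (1:ℂ) * (Q α)ᴴ) q.1 q.2‖ ^ 2 :=
          Finset.sum_comm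
      _ = D := by
          rw [hD]
          refine Finset.sum_congr rfl fun q' _ => ?_
          rw [RkAux.fnsq, Fintype.sum_prod_type]
  -- apply the Gram dimension bound twice
  have hL1C := RkAux.L1 (v := fun q : Fin n × Fin n =>
    RkAux.memb (ΦC (Matrix.single q.1 q.2 (1:ℂ))))
  rw [RkAux.finrank_span_map ΦC] at hL1C
  simp only [RkAux.memb_norm_sq, RkAux.memb_inner] at hL1C
  rw [hsumC, hpairsC] at hL1C
  have hL1P := RkAux.L1 (v := fun q : Fin n × Fin n =>
    RkAux.memb (Φ (Matrix.single q.1 q.2 (1:ℂ))))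
  rw [RkAux.finrank_span_map Φ] at hL1P
  simp only [RkAux.memb_norm_sq, RkAux.memb_inner] at hL1P
  rw [hPhiFnsq, hpairsP, hDgQ] at hL1P
  -- final arithmetic
  have hgQ0 : 0 ≤ gQ := by rw [hgQ]; positivity
  have hg0 : 0 ≤ g := by rw [hg]; positivity
  have hr1 : (0:ℝ) ≤ (Module.finrank ℂ (LinearMap.range Φ) : ℝ) := by positivity
  have hr2 : (0:ℝ) ≤ (Module.finrank ℂ (LinearMap.range ΦC) : ℝ) := by positivity
  have hgQg : gQ ≤ g := hDgQ ▸ hDle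
  have hmain : ((n:ℝ)) ^ 2 ≤ (Module.finrank ℂ (LinearMap.range Φ) : ℝ)
      * (Module.finrank ℂ (LinearMap.range ΦC) : ℝ) := by
    rcases eq_or_lt_of_le hgQ0 with h0 | h0
    · calc ((n:ℝ)) ^ 2 ≤ (Module.finrank ℂ (LinearMap.range ΦC) : ℝ) * gQ := hL1C
        _ = 0 := by rw [← h0, mul_zero]
        _ ≤ _ := mul_nonneg hr1 hr2
    · have hgpos : 0 < g := lt_of_lt_of_le h0 hgQg
      have hgle : g ≤ (Module.finrank ℂ (LinearMap.range Φ) : ℝ) := by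
        have h2 : g * g ≤ (Module.finrank ℂ (LinearMap.range Φ) : ℝ) * g := by
          calc g * g = g ^ 2 := by ring
            _ ≤ (Module.finrank ℂ (LinearMap.range Φ) : ℝ) * gQ := hL1P
            _ ≤ (Module.finrank ℂ (LinearMap.range Φ) : ℝ) * g :=
                mul_le_mul_of_nonneg_left hgQg hr1
        exact le_of_mul_le_mul_right h2 hgpos
      calc ((n:ℝ)) ^ 2 ≤ (Module.finrank ℂ (LinearMap.range ΦC) : ℝ) * gQ := hL1C
        _ ≤ (Module.finrank ℂ (LinearMap.range ΦC) : ℝ) * g :=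
            mul_le_mul_of_nonneg_left hgQg hr2
        _ ≤ (Module.finrank ℂ (LinearMap.range ΦC) : ℝ)
            * (Module.finrank ℂ (LinearMap.range Φ) : ℝ) :=
            mul_le_mul_of_nonneg_left hgle hr2
        _ = (Module.finrank ℂ (LinearMap.range Φ) : ℝ)
            * (Module.finrank ℂ (LinearMap.range ΦC) : ℝ) := by ring
  exact_mod_cast hmain
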